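/- Spectrum of an equilateral polygon: let n ≥ 3, ℓ > 0 and L = nℓ. Define Spec as the set of λ ∈ ℝ for which there exists a nonzero pair (α, β) ∈ ℝ^n × ℝ^n satisfying, cyclically in i (indices mod n), α_{i+1} = α_i + β_i and λ α_{i+1} = (β_i − β_{i+1})/ℓ. Then Spec = { (4n/L) · sin²(kπ/n) : k ∈ {0, 1, …, ⌊n/2⌋} }. In particular the smallest nonzero element of Spec is (4n/L) sin²(π/n). -/

import Mathlib

open scoped Real

noncomputable section

/-- The spectrum of an equilateral polygon with `n` sides of length `ℓ`: the set of `λ ∈ ℝ`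
admitting a nonzero piecewise-affine eigenfunction, encoded by `(α, β)` with
`αᵢ₊₁ = αᵢ + βᵢ` (continuity at the vertices) and `λ αᵢ₊₁ = (βᵢ − βᵢ₊₁)/ℓ`
(eigenvalue equation at the vertices), indices cyclic mod `n`. -/
def equilateralSpec (n : ℕ) [NeZero n] (ℓ : ℝ) : Set ℝ :=
  { lam : ℝ | ∃ α β : ZMod n → ℝ, (α, β) ≠ 0 ∧
      (∀ i, α (i + 1) = α i + β i) ∧ (∀ i, lam * α (i + 1) = (β i - β (i + 1)) / ℓ) }

namespace EquilateralSpecAux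

open Complex Finset

variable {n : ℕ} [NeZero n]

lemma dft_shift (Φ : ZMod n → ℂ) (c k : ZMod n) :
    ZMod.dft (fun j => Φ (j + c)) k = ZMod.stdAddChar (c * k) * ZMod.dft Φ k := by
  rw [ZMod.dft_apply, ZMod.dft_apply, Finset.mul_sum]
  refine Fintype.sum_equiv (Equiv.addRight c) _ _ (fun x => ?_)
  simp only [Equiv.coe_addRight, smul_eq_mul]
  rw [← mul_assoc, ← AddChar.map_add_eq_mul]
  congr 2
  ring

lemma char_add_char (k : ZMod n) :
    ZMod.stdAddChar k + ZMod.stdAddChar (-k) =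
      2 * (Real.cos (2 * π * k.val / n) : ℂ) := by
  obtain ⟨m, hm, rfl⟩ : ∃ m : ℕ, m < n ∧ ((m : ℤ) : ZMod n) = k := by
    refine ⟨k.val, ZMod.val_lt k, ?_⟩
    push_cast
    simp [ZMod.natCast_val, ZMod.cast_id']
  have hneg : -(((m : ℤ) : ZMod n)) = (((-m : ℤ) : ZMod n)) := by push_cast; ring
  have hval : (((m : ℤ) : ZMod n)).val = m % n := by
    push_cast
    exact ZMod.val_natCast n m
  rw [hneg, ZMod.stdAddChar_coe, ZMod.stdAddChar_coe, hval, Nat.mod_eq_of_lt hm]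
  have hx : (2 * Real.pi * I * ((m : ℤ) : ℂ) / n : ℂ) = ((2 * π * m / n : ℝ) : ℂ) * I := by
    push_cast; ring
  have hx' : (2 * Real.pi * I * ((-m : ℤ) : ℂ) / n : ℂ) = (-(2 * π * m / n : ℝ) : ℝ) * I := by
    push_cast; ring
  rw [hx, hx', Complex.exp_mul_I, Complex.exp_mul_I]
  push_cast [Complex.cos_neg, Complex.sin_neg]
  ring

lemma intCast_val' (j : ZMod n) : ((j.val : ℤ) : ZMod n) = j := by
  push_cast
  simp [ZMod.natCast_val, ZMod.cast_id']

lemma mem_spec' {ℓ : ℝ} (hℓ : 0 < ℓ) (k : ℕ) :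
    (4 / ℓ) * Real.sin (k * π / n) ^ 2 ∈ equilateralSpec n ℓ := by
  have hn : (n : ℝ) ≠ 0 := Nat.cast_ne_zero.mpr (NeZero.ne n)
  set lam : ℝ := (4 / ℓ) * Real.sin (k * π / n) ^ 2 with hlam
  set θ : ℝ := 2 * π * k / n with hθ
  set A : ℤ → ℝ := fun m => Real.cos (θ * m) with hAdef
  have hcong : ∀ m m' : ℤ, ((m : ZMod n) = (m' : ZMod n)) → A m = A m' := by
    intro m m' hmm'
    obtain ⟨t, ht⟩ : (n : ℤ) ∣ m' - m :=
      ((ZMod.intCast_eq_intCast_iff _ _ _).mp hmm').dvd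
    have hm' : m' = m + t * n := by linarith
    have harg : θ * (m' : ℝ) = θ * m + (k * t : ℤ) * (2 * π) := by
      rw [hm', hθ]
      push_cast
      field_simp
    show Real.cos _ = Real.cos _
    rw [harg, Real.cos_add_int_mul_two_pi]
  set α : ZMod n → ℝ := fun i => A (i.val : ℤ) with hα
  have key : ∀ (i : ZMod n) (d : ℕ), α (i + (d : ZMod n)) = A ((i.val : ℤ) + d) := by
    intro i d
    refine hcong _ _ ?_
    rw [intCast_val']
    push_cast
    simp [ZMod.natCast_val, ZMod.cast_id', add_comm]
  refine ⟨α, fun i => α (i + 1) - α i, ?_, fun i => by ring, ?_⟩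
  · intro hcontra
    have h0 : α 0 = 0 := by
      have := congrArg Prod.fst hcontra
      simp only [Prod.fst_zero] at this
      exact congrFun this 0
    have h1 : α 0 = 1 := by
      show A ((0 : ZMod n).val : ℤ) = 1
      rw [ZMod.val_zero]
      show Real.cos (θ * ((0:ℤ) : ℝ)) = 1
      simp
    rw [h1] at h0
    exact one_ne_zero h0
  · intro i
    have k0 : α i = A ((i.val : ℤ)) := by
      have := key i 0
      simpa using this
    have k1 : α (i + 1) = A ((i.val : ℤ) + 1) := by
      have := key i 1
      simpa using this
    have k2 : α (i + 1 + 1) = A ((i.val : ℤ) + 2) := by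
      have h := key i 2
      have e : (i + ((2:ℕ) : ZMod n)) = i + 1 + 1 := by push_cast; ring
      rw [e] at h
      push_cast at h ⊢
      exact h
    dsimp only
    rw [k0, k1, k2]
    simp only [hAdef]
    push_cast
    set w : ℝ := (i.val : ℝ) with hw
    have hcos : Real.cos θ = 1 - 2 * Real.sin (k * π / n) ^ 2 := by
      have h2 : θ = 2 * (k * π / n) := by rw [hθ]; ring
      have := Real.sin_sq_add_cos_sq (k * π / n)
      rw [h2, Real.cos_two_mul]
      nlinarith
    have e1 : θ * w = θ * (w + 1) - θ := by ring
    have e2 : θ * (w + 2) = θ * (w + 1) + θ := by ring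
    rw [e1, e2, Real.cos_sub, Real.cos_add, hcos, hlam]
    field_simp
    ring

lemma spec_forward {ℓ lam : ℝ} (hℓ : 0 < ℓ) (h : lam ∈ equilateralSpec n ℓ) :
    ∃ k : ℕ, k ≤ n / 2 ∧ lam = (4 / ℓ) * Real.sin (k * π / n) ^ 2 := by
  have hn : (n : ℝ) ≠ 0 := Nat.cast_ne_zero.mpr (NeZero.ne n)
  obtain ⟨α, β, hne, h1, h2⟩ := h
  have hβ : ∀ i, β i = α (i + 1) - α i := fun i => by have := h1 i; linarith
  have hα : α ≠ 0 := by
    intro hc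
    apply hne
    have hb : β = 0 := by
      funext i
      rw [hβ i, hc]
      simp
    rw [hc, hb]
    rfl
  -- the Laplacian equation
  have key : ∀ j : ZMod n, lam * ℓ * α j = 2 * α j - α (j - 1) - α (j + 1) := by
    intro j
    have h := h2 (j - 1)
    rw [sub_add_cancel] at h
    rw [hβ (j - 1), hβ j, sub_add_cancel] at h
    field_simp at h
    linarith
  -- complexify
  set Φ : ZMod n → ℂ := fun j => (α j : ℂ) with hΦdef
  have hΦ : Φ ≠ 0 := by
    intro hc
    apply hα
    funext j
    have := congrFun hc j
    simpa [hΦdef] using this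
  set μ : ℂ := ((lam * ℓ : ℝ) : ℂ) with hμ
  have keyC : μ • Φ = (2 : ℂ) • Φ - (fun j => Φ (j + 1)) - (fun j => Φ (j + (-1))) := by
    funext j
    have hj := congrArg (fun x : ℝ => (x : ℂ)) (key j)
    push_cast at hj
    simp only [Pi.smul_apply, Pi.sub_apply, smul_eq_mul]
    rw [show j + (-1 : ZMod n) = j - 1 by ring]
    show μ * ((α j : ℝ) : ℂ) = 2 * ((α j : ℝ) : ℂ) - ((α (j + 1) : ℝ) : ℂ) - ((α (j - 1) : ℝ) : ℂ)
    rw [hμ]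
    push_cast
    linear_combination hj
  have hF : ZMod.dft Φ ≠ 0 := fun hc => hΦ ((LinearEquiv.map_eq_zero_iff _).mp hc)
  obtain ⟨k, hk⟩ := Function.ne_iff.mp hF
  have heq : μ * ZMod.dft Φ k =
      (2 - ZMod.stdAddChar k - ZMod.stdAddChar (-k)) * ZMod.dft Φ k := by
    have := congrArg ZMod.dft keyC
    rw [map_smul, map_sub, map_sub, map_smul] at this
    have := congrFun this k
    simp only [Pi.smul_apply, Pi.sub_apply, smul_eq_mul] at this
    rw [dft_shift Φ 1 k, dft_shift Φ (-1) k, one_mul, neg_one_mul] at this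
    rw [this]
    ring
  have hμval : μ = 2 - ZMod.stdAddChar k - ZMod.stdAddChar (-k) :=
    mul_right_cancel₀ hk heq
  have hμval2 : μ = 2 - 2 * (Real.cos (2 * π * k.val / n) : ℂ) := by
    rw [hμval, ← char_add_char k]
    ring
  have hreal : lam * ℓ = 2 - 2 * Real.cos (2 * π * k.val / n) := by
    have : ((lam * ℓ : ℝ) : ℂ) = ((2 - 2 * Real.cos (2 * π * k.val / n) : ℝ) : ℂ) := by
      rw [← hμ, hμval2]
      push_cast
      ring
    exact_mod_cast this
  set m : ℕ := k.val with hm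
  have hmn : m < n := ZMod.val_lt k
  have hsin : lam = (4 / ℓ) * Real.sin (m * π / n) ^ 2 := by
    have hc2 : Real.cos (2 * (m * π / n)) = 1 - 2 * Real.sin (m * π / n) ^ 2 := by
      have := Real.sin_sq_add_cos_sq (m * π / n)
      rw [Real.cos_two_mul]
      nlinarith
    have harg : 2 * π * m / n = 2 * (m * π / n) := by ring
    rw [harg, hc2] at hreal
    field_simp
    linarith
  by_cases hle : m ≤ n / 2
  · exact ⟨m, hle, hsin⟩
  · refine ⟨n - m, by omega, ?_⟩
    rw [hsin]
    congr 2
    have : ((n - m : ℕ) : ℝ) = (n : ℝ) - m := by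
      rw [Nat.cast_sub hmn.le]
    rw [this]
    have : ((n : ℝ) - m) * π / n = π - m * π / n := by
      field_simp
    rw [this, Real.sin_pi_sub]

end EquilateralSpecAux

open EquilateralSpecAux in
/-- **Spectrum of an equilateral polygon**: for an equilateral polygon with `n ≥ 3` sides of
length `ℓ > 0` and perimeter `L = nℓ`, the spectrum is
`{(4n/L) sin²(kπ/n) : 0 ≤ k ≤ ⌊n/2⌋}`; in particular its smallest nonzero element is
`(4n/L) sin²(π/n)`. -/
theorem equilateral_polygon_spectrum (n : ℕ) [NeZero n] (hn : 3 ≤ n) (ℓ L : ℝ)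
    (hℓ : 0 < ℓ) (hL : L = n * ℓ) :
    equilateralSpec n ℓ =
        { x : ℝ | ∃ k : ℕ, k ≤ n / 2 ∧ x = (4 * n / L) * Real.sin (k * π / n) ^ 2 } ∧
      IsLeast { x : ℝ | x ∈ equilateralSpec n ℓ ∧ x ≠ 0 }
        ((4 * n / L) * Real.sin (π / n) ^ 2) := by
  have hn0 : 0 < n := by omega
  have hnR : (0 : ℝ) < n := Nat.cast_pos.mpr hn0
  have hLpos : 0 < L := by rw [hL]; positivity
  have hcoef : 4 * (n : ℝ) / L = 4 / ℓ := by
    rw [hL]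
    field_simp
  have hset : equilateralSpec n ℓ =
      { x : ℝ | ∃ k : ℕ, k ≤ n / 2 ∧ x = (4 * n / L) * Real.sin (k * π / n) ^ 2 } := by
    ext lam
    simp only [Set.mem_setOf_eq]
    constructor
    · intro h
      obtain ⟨k, hk, hval⟩ := spec_forward hℓ h
      exact ⟨k, hk, by rw [hval, hcoef]⟩
    · rintro ⟨k, hk, rfl⟩
      rw [hcoef]
      exact mem_spec' hℓ k
  refine ⟨hset, ?_, ?_⟩
  · -- membership
    constructor
    · rw [hset]
      refine ⟨1, by omega, ?_⟩
      norm_num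
    · have hsinpos : 0 < Real.sin (π / n) := by
        apply Real.sin_pos_of_pos_of_lt_pi
        · positivity
        · rw [div_lt_iff₀ hnR]
          have h3n : (3:ℝ) ≤ n := by exact_mod_cast hn
          nlinarith [Real.pi_pos]
      positivity
  · -- lower bound
    rintro x ⟨hx, hx0⟩
    rw [hset] at hx
    obtain ⟨k, hk, rfl⟩ := hx
    have hk0 : k ≠ 0 := by
      rintro rfl
      simp at hx0
    have h1k : (1 : ℝ) ≤ k := by exact_mod_cast Nat.one_le_iff_ne_zero.mpr hk0
    have h2k : 2 * k ≤ n := by omega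
    have hb1 : π / n ≤ k * π / n := by
      gcongr
      nlinarith [Real.pi_pos]
    have hb2 : k * π / n ≤ π / 2 := by
      rw [div_le_div_iff₀ hnR two_pos]
      have : (2 : ℝ) * k ≤ n := by exact_mod_cast h2k
      nlinarith [Real.pi_pos]
    have hmono : Real.sin (π / n) ≤ Real.sin (k * π / n) := by
      apply Real.sin_le_sin_of_le_of_le_pi_div_two _ hb2 hb1
      have : (0:ℝ) < π / n := by positivity
      linarith [Real.pi_pos]
    have hs0 : 0 ≤ Real.sin (π / n) := by
      apply Real.sin_nonneg_of_nonneg_of_le_pi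
      · positivity
      · nlinarith [Real.pi_pos]
    gcongr
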